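/- The Fréchet fan (the quotient of the disjoint sum of countably many convergent sequences ω+1 identifying all limit points to one point ∞) is not premetrisable. -/

import Mathlib

open scoped NNReal

/-- ε-δ continuity between premetric spaces. -/
def IsEDContinuous {X Y : Type*} (d : X → X → ℝ≥0) (m : Y → Y → ℝ≥0) (f : X → Y) : Prop :=
  ∀ x : X, ∀ ε : ℝ≥0, 0 < ε → ∃ δ : ℝ≥0, 0 < δ ∧ ∀ x', d x x' < δ → m (f x) (f x') < ε

/-- Topology generated by a premetric. -/
def premetricTopology {X : Type*} (d : X → X → ℝ≥0) : TopologicalSpace X where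
  IsOpen U := ∀ x ∈ U, ∃ ε : ℝ≥0, 0 < ε ∧ ∀ y, d x y < ε → y ∈ U
  isOpen_univ := fun _ _ => ⟨1, one_pos, fun _ _ => trivial⟩
  isOpen_inter := by
    rintro s t hs ht x ⟨hxs, hxt⟩
    obtain ⟨ε₁, hε₁, h₁⟩ := hs x hxs
    obtain ⟨ε₂, hε₂, h₂⟩ := ht x hxt
    exact ⟨min ε₁ ε₂, lt_min hε₁ hε₂, fun y hy =>
      ⟨h₁ y (hy.trans_le (min_le_left _ _)), h₂ y (hy.trans_le (min_le_right _ _))⟩⟩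
  isOpen_sUnion := by
    rintro S hS x ⟨s, hsS, hxs⟩
    obtain ⟨ε, hε, h⟩ := hS s hsS x hxs
    exact ⟨ε, hε, fun y hy => ⟨s, hsS, h y hy⟩⟩

open OnePoint in
/-- The Fréchet fan: countably many convergent sequences with all limit
points identified. -/
def fanSetoid : Setoid (Σ _ : ℕ, OnePoint ℕ) where
  r p q := p = q ∨ (p.2 = ∞ ∧ q.2 = ∞)
  iseqv := by
    constructor
    · exact fun _ => Or.inl rfl
    · rintro p q (rfl | ⟨h1, h2⟩)
      · exact Or.inl rfl
      · exact Or.inr ⟨h2, h1⟩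
    · rintro p q r (rfl | ⟨h1, h2⟩) h
      · exact h
      · rcases h with rfl | ⟨h3, h4⟩
        · exact Or.inr ⟨h1, h2⟩
        · exact Or.inr ⟨h1, h4⟩

/-- The Fréchet fan as a quotient (with the quotient topology). -/
def FrechetFan : Type := Quotient fanSetoid

instance : TopologicalSpace FrechetFan := instTopologicalSpaceQuotient

open OnePoint

private lemma fan_mk_eq_coe_iff {m m' j : ℕ} {x : OnePoint ℕ} :
    Quotient.mk fanSetoid ⟨m', x⟩ = Quotient.mk fanSetoid ⟨m, (j : ℕ)⟩ ↔
      m' = m ∧ x = (j : OnePoint ℕ) := by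
  constructor
  · intro h
    rcases Quotient.exact h with h | ⟨h1, h2⟩
    · obtain ⟨rfl, h2⟩ := Sigma.mk.inj_iff.mp h
      exact ⟨rfl, eq_of_heq h2⟩
    · exact absurd h2 (OnePoint.coe_ne_infty j)
  · rintro ⟨rfl, rfl⟩; rfl

private lemma fan_infty_ne_coe (n m k : ℕ) :
    Quotient.mk fanSetoid ⟨n, (∞ : OnePoint ℕ)⟩ ≠ Quotient.mk fanSetoid ⟨m, (k : ℕ)⟩ := by
  intro h
  exact OnePoint.infty_ne_coe k (fan_mk_eq_coe_iff.mp h).2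

private lemma fan_isOpen_iff (U : Set FrechetFan) :
    IsOpen U ↔ IsOpen (Quotient.mk fanSetoid ⁻¹' U) :=
  isOpen_coinduced

/-- Each point of the form ⟨m, j⟩ with j finite is isolated in the fan. -/
private lemma fan_isolated (m j : ℕ) :
    IsOpen ({Quotient.mk fanSetoid ⟨m, (j : ℕ)⟩} : Set FrechetFan) := by
  rw [fan_isOpen_iff]
  have hpre : Quotient.mk fanSetoid ⁻¹' {Quotient.mk fanSetoid ⟨m, (j : ℕ)⟩}
      = {(⟨m, (j : ℕ)⟩ : Σ _ : ℕ, OnePoint ℕ)} := by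
    ext ⟨m', x⟩
    simp only [Set.mem_preimage, Set.mem_singleton_iff, fan_mk_eq_coe_iff, Sigma.mk.inj_iff]
    constructor
    · rintro ⟨rfl, rfl⟩; exact ⟨rfl, HEq.rfl⟩
    · rintro ⟨rfl, h⟩; exact ⟨rfl, eq_of_heq h⟩
  refine (congrArg IsOpen hpre).mpr ?_
  rw [isOpen_sigma_iff]
  intro i
  by_cases hi : i = m
  · subst hi
    have : Sigma.mk i ⁻¹' ({(⟨i, (j : ℕ)⟩ : Σ _ : ℕ, OnePoint ℕ)}) = {(j : OnePoint ℕ)} := by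
      ext x; simp [Sigma.mk.inj_iff]
    rw [this, OnePoint.isOpen_iff_of_notMem (by simp)]
    simp [Set.preimage]
  · have : Sigma.mk i ⁻¹' ({(⟨m, (j : ℕ)⟩ : Σ _ : ℕ, OnePoint ℕ)}) = ∅ := by
      ext x; simp [Sigma.mk.inj_iff, hi]
    rw [this]; exact isOpen_empty

/-- the Fréchet fan is not premetrisable. -/
theorem frechetFan_not_premetrisable :
    ¬ ∃ d : FrechetFan → FrechetFan → ℝ≥0,
        (∀ x, d x x = 0) ∧ premetricTopology d = (inferInstance : TopologicalSpace FrechetFan) := by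
  rintro ⟨d, hd0, htop⟩
  have hopen_iff : ∀ U : Set FrechetFan,
      IsOpen U ↔ ∀ x ∈ U, ∃ ε : ℝ≥0, 0 < ε ∧ ∀ y, d x y < ε → y ∈ U := by
    intro U
    have h1 : IsOpen U ↔ @IsOpen _ (premetricTopology d) U := by rw [htop]
    exact h1.trans Iff.rfl
  set star : FrechetFan := Quotient.mk fanSetoid ⟨0, (∞ : OnePoint ℕ)⟩ with hstar
  have hstar_eq : ∀ n : ℕ, Quotient.mk fanSetoid ⟨n, (∞ : OnePoint ℕ)⟩ = star := by
    intro n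
    exact Quotient.sound (Or.inr ⟨rfl, rfl⟩)
  -- isolated points have "isolating" balls
  have hiso : ∀ m j : ℕ, ∃ ε : ℝ≥0, 0 < ε ∧
      ∀ y, d (Quotient.mk fanSetoid ⟨m, (j : ℕ)⟩) y < ε →
        y = Quotient.mk fanSetoid ⟨m, (j : ℕ)⟩ := by
    intro m j
    obtain ⟨ε, hε, hball⟩ := (hopen_iff _).mp (fan_isolated m j) _ rfl
    exact ⟨ε, hε, fun y hy => hball y hy⟩
  by_cases hcase : ∀ n : ℕ, ∃ k : ℕ,
      d star (Quotient.mk fanSetoid ⟨n, (k : ℕ)⟩) < (1 / (n + 1) : ℝ≥0)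
  · -- case (i): pick a close point on each spine; their complement is open but
    -- every ball at ∞ hits one of them.
    choose k hk using hcase
    set U : Set FrechetFan := {z | ∀ n : ℕ, z ≠ Quotient.mk fanSetoid ⟨n, (k n : ℕ)⟩} with hU
    have hUopen : IsOpen U := by
      rw [fan_isOpen_iff, isOpen_sigma_iff]
      intro i
      have : Sigma.mk i ⁻¹' (Quotient.mk fanSetoid ⁻¹' U)
          = {x : OnePoint ℕ | x ≠ (k i : OnePoint ℕ)} := by
        ext x
        simp only [Set.mem_preimage, hU, Set.mem_setOf_eq]
        constructor
        · intro h hx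
          exact h i (by rw [hx])
        · intro hx m hm
          obtain ⟨rfl, h2⟩ := fan_mk_eq_coe_iff.mp hm
          exact hx h2
      rw [this]
      exact isOpen_compl_singleton
    have hstarU : star ∈ U := fun m => fan_infty_ne_coe 0 m (k m)
    obtain ⟨ε, hε, hball⟩ := (hopen_iff U).mp hUopen star hstarU
    obtain ⟨m, hm⟩ : ∃ m : ℕ, (1 / (m + 1) : ℝ≥0) < ε := by
      obtain ⟨m, hm⟩ := exists_nat_one_div_lt (show (0:ℝ) < (ε:ℝ) from hε)
      refine ⟨m, ?_⟩
      rw [← NNReal.coe_lt_coe]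
      push_cast
      exact hm
    exact (hball _ ((hk m).trans hm)) m rfl
  · -- case (ii): some spine stays far from ∞; its complement is
    -- premetric-open but not fan-open.
    push_neg at hcase
    obtain ⟨n, hn⟩ := hcase
    set U : Set FrechetFan := {z | ∀ j : ℕ, z ≠ Quotient.mk fanSetoid ⟨n, (j : ℕ)⟩} with hU
    have hUopen : IsOpen U := by
      rw [hopen_iff]
      rintro x hx
      rcases Quotient.exists_rep x with ⟨⟨m, p⟩, rfl⟩
      cases p with
      | infty =>
        rw [hstar_eq m]
        refine ⟨1 / (n + 1), by positivity, fun y hy => ?_⟩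
        intro j hyj
        rw [hyj] at hy
        exact absurd hy (not_lt.mpr (hn j))
      | coe j =>
        obtain ⟨ε, hε, hball⟩ := hiso m j
        exact ⟨ε, hε, fun y hy => hball y hy ▸ hx⟩
    -- but U is not open in the fan topology
    have hpre := (fan_isOpen_iff U).mp hUopen
    rw [isOpen_sigma_iff] at hpre
    have hopen_infty := hpre n
    have hset : Sigma.mk n ⁻¹' (Quotient.mk fanSetoid ⁻¹' U) = {(∞ : OnePoint ℕ)} := by
      ext x
      simp only [Set.mem_preimage, Set.mem_singleton_iff, hU, Set.mem_setOf_eq]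
      constructor
      · intro h
        cases x with
        | infty => rfl
        | coe j => exact absurd rfl (h j)
      · rintro rfl j h
        exact OnePoint.infty_ne_coe j (fan_mk_eq_coe_iff.mp h).2
    rw [hset] at hopen_infty
    obtain ⟨a, ha⟩ :=
      (OnePoint.denseRange_coe (X := ℕ)).exists_mem_open hopen_infty ⟨∞, rfl⟩
    exact OnePoint.coe_ne_infty a ha
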